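/- Monotonicity of the approximating drivers: For every integer m ≥ 1, every z ∈ ℝ, and every Borel function u : ℝ → ℝ with ∫ u² dν < ∞, the quantities f_m(z,u) and f_{m+1}(z,u) are well defined and satisfy f_m(z,u) ≤ f_{m+1}(z,u). -/

import Mathlib

open MeasureTheory Set

noncomputable section

/-- The exponential penalty function `h_λ(x) = (e^{λx} − λx − 1)/λ`. -/
def hpen (lam x : ℝ) : ℝ := (Real.exp (lam * x) - lam * x - 1) / lam

/-- `φ(x) = arctan x` for `x > 0`, `φ(x) = x` for `x ≤ 0`. -/
def phi0 (x : ℝ) : ℝ := if 0 < x then Real.arctan x else x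

/-- The truncation from above `φ_m(x) = φ(x − m) + m`. -/
def phim (m : ℕ) (x : ℝ) : ℝ := phi0 (x - m) + m

/-- The plateau truncation `ρ_m`. -/
def rhom (m : ℕ) (x : ℝ) : ℝ :=
  if -((m : ℝ) + 1) < x ∧ x < -(m : ℝ) then x + m + 1
  else if -(m : ℝ) ≤ x ∧ x ≤ (m : ℝ) then 1
  else if (m : ℝ) < x ∧ x ≤ (m : ℝ) + 1 then (m : ℝ) + 1 - x
  else 0

/-- `ν_m`: the restriction of `ν` to `ℝ \ [−1/m, 1/m]`. -/
def numeas (ν : Measure ℝ) (m : ℕ) : Measure ℝ :=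
  ν.restrict (Set.Icc (-(1 / (m : ℝ))) (1 / (m : ℝ)))ᶜ

/-- The truncated no-signal part `f¹_m(z,u,p)` of the driver. -/
def f1m (ν : Measure ℝ) (η γ : ℝ → ℝ) (lam Cke : ℝ) (m : ℕ)
    (z : ℝ) (u : ℝ → ℝ) (p : ℝ) : ℝ :=
  lam / 2 * (p - (z + Cke / lam)) ^ 2 * rhom m z
    + (∫ e in {e | γ e = 0}, hpen lam (phim m (u e - p * η e)) ∂(numeas ν m))
    - p * ∫ e in {e | γ e = 0}, η e ∂ν

/-- The truncated signal part `f²_m(g,u,p)` of the driver. -/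
def f2m (η γ : ℝ → ℝ) (K : ℝ → Measure ℝ) (lam : ℝ) (m : ℕ)
    (g : ℝ) (u : ℝ → ℝ) (p : ℝ) : ℝ :=
  (∫ e in {e | γ e = g},
      (if 1 / (m : ℝ) < |e| then hpen lam (phim m (u e - p * η e)) else 0) ∂(K g))
    - p * ∫ e in {e | γ e = g}, η e ∂(K g)

/-- The truncated driver `f_m(z,u)`. -/
def fm (ν μ : Measure ℝ) (η γ : ℝ → ℝ) (K : ℝ → Measure ℝ)
    (lam Cke pil pib : ℝ) (m : ℕ) (z : ℝ) (u : ℝ → ℝ) : ℝ :=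
  (⨅ p : Set.Icc (-pil) pib, f1m ν η γ lam Cke m z u p)
    + (∫ g in ({0}ᶜ : Set ℝ), (⨅ p : Set.Icc (-pil) pib, f2m η γ K lam m g u p) ∂μ)
    - Cke * z - Cke ^ 2 / (2 * lam)

lemma arctan_lipschitz : LipschitzWith 1 Real.arctan := by
  apply lipschitzWith_of_nnnorm_deriv_le Real.differentiable_arctan
  intro x
  rw [Real.deriv_arctan]
  rw [← NNReal.coe_le_coe]
  simp only [coe_nnnorm, Real.norm_eq_abs, NNReal.coe_one]
  rw [abs_of_nonneg (by positivity)]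
  rw [div_le_one (by positivity)]
  nlinarith [sq_nonneg x]

lemma arctan_le_self {x : ℝ} (hx : 0 ≤ x) : Real.arctan x ≤ x := by
  have := arctan_lipschitz.dist_le_mul x 0
  simp only [Real.arctan_zero, NNReal.coe_one, one_mul, Real.dist_eq, sub_zero] at this
  calc Real.arctan x ≤ |Real.arctan x - 0| := by simp [abs_nonneg, le_abs_self]
  _ ≤ |x| := by simpa using this
  _ = x := abs_of_nonneg hx

lemma phi0_eq_min (x : ℝ) : phi0 x = min x (Real.arctan x) := by
  unfold phi0
  split_ifs with h
  · rw [min_eq_right (arctan_le_self h.le)]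
  · push_neg at h
    rw [min_eq_left]
    calc x = -(-x) := by ring
    _ ≤ -(Real.arctan (-x)) := by
          exact neg_le_neg (arctan_le_self (by linarith))
    _ = Real.arctan x := by rw [← Real.arctan_neg]; ring_nf

lemma phi0_le_self (x : ℝ) : phi0 x ≤ x := by rw [phi0_eq_min]; exact min_le_left _ _

lemma phi0_le_two (x : ℝ) : phi0 x ≤ 2 := by
  rw [phi0_eq_min]
  rcases le_or_gt x 2 with h | h
  · exact le_trans (min_le_left _ _) h
  · exact le_trans (min_le_right _ _) (le_trans (Real.arctan_lt_pi_div_two x).le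
      (by linarith [Real.pi_le_four]))

lemma phi0_succ (t : ℝ) : phi0 t ≤ phi0 (t - 1) + 1 := by
  rw [phi0_eq_min, phi0_eq_min]
  have h2 := arctan_lipschitz.dist_le_mul t (t-1)
  simp only [NNReal.coe_one, one_mul, Real.dist_eq] at h2
  have harc : Real.arctan t - Real.arctan (t-1) ≤ 1 := by
    calc Real.arctan t - Real.arctan (t-1) ≤ |Real.arctan t - Real.arctan (t-1)| := le_abs_self _
    _ ≤ |t - (t-1)| := h2
    _ = 1 := by norm_num
  rcases min_cases (t-1) (Real.arctan (t-1)) with ⟨he, _⟩ | ⟨he, _⟩ <;> rw [he]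
  · linarith [min_le_left t (Real.arctan t)]
  · linarith [min_le_right t (Real.arctan t)]

lemma phim_mono_m (m : ℕ) (x : ℝ) : phim m x ≤ phim (m+1) x := by
  unfold phim
  push_cast
  have := phi0_succ (x - m)
  have : phi0 (x - m) ≤ phi0 (x - (m+1)) + 1 := by
    have h := phi0_succ (x - m)
    convert h using 3
    ring
  linarith

lemma phim_le_self (m : ℕ) (x : ℝ) : phim m x ≤ x := by
  unfold phim; linarith [phi0_le_self (x - m)]

lemma phim_le_bound (m : ℕ) (x : ℝ) : phim m x ≤ m + 2 := by
  unfold phim; linarith [phi0_le_two (x - m)]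

lemma phim_eq_of_le {m : ℕ} {x : ℝ} (h : x ≤ m) : phim m x = x := by
  unfold phim
  rw [phi0_eq_min, min_eq_left]
  · ring
  calc x - m = -(-(x-m)) := by ring
  _ ≤ -(Real.arctan (-(x-m))) := neg_le_neg (arctan_le_self (by linarith))
  _ = Real.arctan (x - m) := by rw [← Real.arctan_neg]; ring_nf

lemma phim_nonneg_of_lt {m : ℕ} {x : ℝ} (h : (m:ℝ) < x) : (m:ℝ) ≤ phim m x := by
  unfold phim
  rw [phi0_eq_min]
  have h1 : (0:ℝ) ≤ x - m := by linarith
  have : 0 ≤ min (x - m) (Real.arctan (x-m)) := le_min h1 (by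
    rw [← Real.arctan_zero]; exact Real.arctan_strictMono.monotone h1)
  linarith

lemma abs_phim_le (m : ℕ) (x : ℝ) : |phim m x| ≤ |x| + m + 2 := by
  rcases le_or_gt x m with h | h
  · rw [phim_eq_of_le h]
    have : (0:ℝ) ≤ (m:ℝ) := Nat.cast_nonneg m
    linarith
  · have h1 := phim_nonneg_of_lt h
    have h2 := phim_le_bound m x
    rw [abs_le]
    constructor
    · have : (0:ℝ) ≤ (m:ℝ) := Nat.cast_nonneg m
      have : (0:ℝ) ≤ |x| := abs_nonneg x
      linarith
    · have : (0:ℝ) ≤ |x| := abs_nonneg x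
      linarith

lemma hpen_nonneg {lam : ℝ} (hlam : 0 < lam) (x : ℝ) : 0 ≤ hpen lam x := by
  unfold hpen
  apply div_nonneg _ hlam.le
  nlinarith [Real.add_one_le_exp (lam * x)]

lemma hpen_mono' {lam : ℝ} (hlam : 0 < lam) {a b : ℝ} (ha : 0 ≤ a) (hab : a ≤ b) :
    hpen lam a ≤ hpen lam b := by
  unfold hpen
  have key : Real.exp (lam * a) - lam * a ≤ Real.exp (lam * b) - lam * b := by
    have h1 : Real.exp (lam * b) = Real.exp (lam * a) * Real.exp (lam * b - lam * a) := by
      rw [← Real.exp_add]; ring_nf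
    have h2 : (1:ℝ) ≤ Real.exp (lam * a) := Real.one_le_exp (by positivity)
    have h3 : lam * b - lam * a + 1 ≤ Real.exp (lam * b - lam * a) := Real.add_one_le_exp _
    have h4 : 0 ≤ lam * b - lam * a := by nlinarith
    nlinarith
  exact (div_le_div_iff_of_pos_right hlam).mpr (by linarith)

lemma hpen_phim_mono {lam : ℝ} (hlam : 0 < lam) (m : ℕ) (x : ℝ) :
    hpen lam (phim m x) ≤ hpen lam (phim (m+1) x) := by
  rcases le_or_gt x m with h | h
  · rw [phim_eq_of_le h, phim_eq_of_le (le_trans h (by push_cast; linarith))]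
  · have h0 : (0:ℝ) ≤ phim m x :=
      le_trans (Nat.cast_nonneg m) (phim_nonneg_of_lt h)
    exact hpen_mono' hlam h0 (phim_mono_m m x)

def Cbound (lam : ℝ) (m : ℕ) : ℝ := (Real.exp (lam*((m:ℝ)+2)) + lam*((m:ℝ)+2) + 1)/lam

lemma hpen_phim_bound {lam : ℝ} (hlam : 0 < lam) (m : ℕ) (x : ℝ) :
    hpen lam (phim m x) ≤ Cbound lam m + |x| := by
  unfold hpen Cbound
  have h1 : Real.exp (lam * phim m x) ≤ Real.exp (lam*((m:ℝ)+2)) :=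
    Real.exp_le_exp.mpr (by nlinarith [phim_le_bound m x])
  have h2 : |phim m x| ≤ |x| + m + 2 := abs_phim_le m x
  have h3 : -(lam * phim m x) ≤ lam * (|x| + m + 2) := by
    have := neg_abs_le (phim m x)
    nlinarith
  rw [div_add' _ _ _ (ne_of_gt hlam)]
  exact (div_le_div_iff_of_pos_right hlam).mpr (by nlinarith)

lemma continuous_phi0 : Continuous phi0 := by
  have : phi0 = fun x => min x (Real.arctan x) := funext phi0_eq_min
  rw [this]
  exact continuous_id.min Real.continuous_arctan

lemma continuous_phim (m : ℕ) : Continuous (phim m) :=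
  ((continuous_phi0.comp (continuous_id.sub continuous_const)).add continuous_const)

lemma continuous_hpen (lam : ℝ) : Continuous (hpen lam) := by
  unfold hpen
  fun_prop

lemma measurable_phim (m : ℕ) : Measurable (phim m) := (continuous_phim m).measurable

/-- Sequence of clamped rationals, dense in `Icc a b`. -/
def pseq (a b : ℝ) (n : ℕ) : ℝ := max a (min b (((Denumerable.eqv ℚ).symm n : ℚ) : ℝ))

lemma pseq_mem {a b : ℝ} (hab : a ≤ b) (n : ℕ) : pseq a b n ∈ Set.Icc a b :=
  ⟨le_max_left _ _, max_le hab (min_le_left _ _)⟩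

lemma clamp_dist {a b p q : ℝ} (hp : p ∈ Set.Icc a b) :
    |max a (min b q) - p| ≤ |q - p| := by
  obtain ⟨h1, h2⟩ := hp
  rcases le_total q a with hqa | haq
  · rw [min_eq_right (le_trans hqa (le_trans h1 h2)), max_eq_left hqa]
    have e1 : |a - p| = p - a := by rw [abs_sub_comm]; exact abs_of_nonneg (by linarith)
    have e2 : |q - p| = p - q := by rw [abs_sub_comm]; exact abs_of_nonneg (by linarith)
    rw [e1, e2]; linarith
  · rcases le_total q b with hqb | hbq
    · rw [min_eq_right hqb, max_eq_right haq]
    · rw [min_eq_left hbq, max_eq_right (le_trans h1 h2)]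
      rw [abs_of_nonneg (by linarith), abs_of_nonneg (by linarith)]
      linarith

lemma ciInf_Icc_eq_pseq {a b : ℝ} (hab : a ≤ b) {f : ℝ → ℝ} (hf : ContinuousOn f (Set.Icc a b))
    {L : ℝ} (hL : ∀ x ∈ Set.Icc a b, L ≤ f x) :
    ⨅ p : Set.Icc a b, f p = ⨅ n : ℕ, f (pseq a b n) := by
  have hne : Nonempty (Set.Icc a b) := (Set.nonempty_Icc.2 hab).to_subtype
  have hbd1 : BddBelow (Set.range fun p : Set.Icc a b => f p) :=
    ⟨L, by rintro _ ⟨p, rfl⟩; exact hL p p.2⟩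
  have hbd2 : BddBelow (Set.range fun n : ℕ => f (pseq a b n)) :=
    ⟨L, by rintro _ ⟨n, rfl⟩; exact hL _ (pseq_mem hab n)⟩
  apply le_antisymm
  · exact le_ciInf fun n => ciInf_le hbd1 (⟨pseq a b n, pseq_mem hab n⟩ : Set.Icc a b)
  · refine le_ciInf fun p => ?_
    refine le_of_forall_pos_le_add fun ε hε => ?_
    obtain ⟨δ, hδ, hcont⟩ := Metric.continuousOn_iff.mp hf (p : ℝ) p.2 ε hε
    obtain ⟨q, hq⟩ := exists_rat_near (p : ℝ) hδ
    set n := (Denumerable.eqv ℚ) q with hn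
    have hofnat : ((Denumerable.eqv ℚ).symm n : ℚ) = q := Equiv.symm_apply_apply _ q
    have hdist : dist (pseq a b n) (p : ℝ) < δ := by
      rw [Real.dist_eq]
      unfold pseq
      rw [hofnat]
      calc |max a (min b (q:ℝ)) - p| ≤ |(q:ℝ) - p| := clamp_dist p.2
      _ < δ := by rw [abs_sub_comm]; exact hq
    have := hcont _ (pseq_mem hab n) hdist
    rw [Real.dist_eq, abs_lt] at this
    have h1 : ⨅ n : ℕ, f (pseq a b n) ≤ f (pseq a b n) := ciInf_le hbd2 n
    linarith [this.2]

lemma numeas_set_finite {ν : Measure ℝ}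
    (hν2 : (∫⁻ e, ENNReal.ofReal (min 1 (e ^ 2)) ∂ν) < ⊤) {k : ℕ} (hk : 1 ≤ k) :
    ν (Set.Icc (-(1 / (k : ℝ))) (1 / (k : ℝ)))ᶜ < ⊤ := by
  set s := (Set.Icc (-(1 / (k : ℝ))) (1 / (k : ℝ)))ᶜ with hs
  have hkpos : (0:ℝ) < 1 / (k:ℝ) := by
    have : (0:ℝ) < (k:ℝ) := by exact_mod_cast hk
    positivity
  have hk1 : (1 / (k:ℝ)) ≤ 1 := by
    rw [div_le_one (by exact_mod_cast hk)]
    exact_mod_cast hk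
  set c : ℝ := (1 / (k:ℝ))^2 with hc
  have hcpos : 0 < c := by positivity
  have hc1 : c ≤ 1 := by nlinarith
  have hsm : MeasurableSet s := (measurableSet_Icc).compl
  have key : ∀ e ∈ s, ENNReal.ofReal c ≤ ENNReal.ofReal (min 1 (e ^ 2)) := by
    intro e he
    apply ENNReal.ofReal_le_ofReal
    simp only [s, Set.mem_compl_iff, Set.mem_Icc, not_and_or, not_le] at he
    have he2 : (1/(k:ℝ))^2 ≤ e^2 := by
      rcases he with h | h
      · nlinarith
      · nlinarith
    exact le_min (by linarith) (by linarith)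
  have h1 : ENNReal.ofReal c * ν s ≤ ∫⁻ e, ENNReal.ofReal (min 1 (e ^ 2)) ∂ν := by
    calc ENNReal.ofReal c * ν s = ∫⁻ _ in s, ENNReal.ofReal c ∂ν := (setLIntegral_const s _).symm
    _ ≤ ∫⁻ e in s, ENNReal.ofReal (min 1 (e ^ 2)) ∂ν :=
        setLIntegral_mono' hsm fun e he => key e he
    _ ≤ ∫⁻ e, ENNReal.ofReal (min 1 (e ^ 2)) ∂ν := setLIntegral_le_lintegral s _
  by_contra h
  push_neg at h
  rw [top_le_iff.mp h, ENNReal.mul_top (by simp [ENNReal.ofReal_eq_zero]; linarith)] at h1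
  rw [top_le_iff.mp h1] at hν2
  exact absurd hν2 (lt_irrefl ⊤)

lemma hpen_sub_bound {lam : ℝ} (hlam : 0 < lam) (k : ℕ) {p P : ℝ} (hp : |p| ≤ P)
    (a b : ℝ) : hpen lam (phim k (a - p * b)) ≤ Cbound lam k + (|a| + P * |b|) := by
  refine le_trans (hpen_phim_bound hlam k _) ?_
  have h1 : |a - p * b| ≤ |a| + P * |b| := by
    calc |a - p * b| ≤ |a| + |p * b| := abs_sub a (p*b)
    _ = |a| + |p| * |b| := by rw [abs_mul]
    _ ≤ |a| + P * |b| := by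
        have := abs_nonneg b
        nlinarith
  linarith

lemma abs_le_one_add_sq (x : ℝ) : |x| ≤ 1 + x ^ 2 := by
  nlinarith [sq_nonneg (|x| - 1), abs_nonneg x, sq_abs x]

lemma integrable_hpen_fin {ρ : Measure ℝ} [IsFiniteMeasure ρ] {η u : ℝ → ℝ}
    (hηmeas : Measurable η) (humeas : Measurable u)
    (hηint : Integrable η ρ) (hu2 : Integrable (fun e => (u e) ^ 2) ρ)
    {lam : ℝ} (hlam : 0 < lam) (k : ℕ) {p P : ℝ} (hp : |p| ≤ P) :
    Integrable (fun e => hpen lam (phim k (u e - p * η e))) ρ := by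
  have habsu : Integrable (fun e => |u e|) ρ := by
    refine Integrable.mono' ((integrable_const (1:ℝ)).add hu2)
      humeas.abs.aestronglyMeasurable (Filter.Eventually.of_forall fun e => ?_)
    rw [Real.norm_eq_abs, abs_abs]
    exact abs_le_one_add_sq (u e)
  have hbnd : Integrable (fun e => Cbound lam k + (|u e| + P * |η e|)) ρ :=
    (integrable_const _).add (habsu.add (hηint.abs.const_mul P))
  refine Integrable.mono' hbnd ?_ (Filter.Eventually.of_forall fun e => ?_)
  · exact ((continuous_hpen lam).measurable.comp ((measurable_phim k).comp
      (humeas.sub (hηmeas.const_mul p)))).aestronglyMeasurable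
  · rw [Real.norm_eq_abs, abs_of_nonneg (hpen_nonneg hlam _)]
    exact hpen_sub_bound hlam k hp (u e) (η e)

lemma rhom_nonneg (m : ℕ) (x : ℝ) : 0 ≤ rhom m x := by
  unfold rhom
  split_ifs with h1 h2 h3
  · linarith [h1.1]
  · norm_num
  · linarith [h3.2]
  · exact le_refl _

lemma rhom_le_one (m : ℕ) (x : ℝ) : rhom m x ≤ 1 := by
  unfold rhom
  split_ifs with h1 h2 h3
  · linarith [h1.2]
  · exact le_refl _
  · linarith [h3.1]
  · norm_num

lemma rhom_mono (m : ℕ) (x : ℝ) : rhom m x ≤ rhom (m+1) x := by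
  have hm : (0:ℝ) ≤ (m:ℝ) := Nat.cast_nonneg m
  rcases le_or_gt x (-((m:ℝ)+1)) with h | h
  · have h0 : rhom m x = 0 := by
      unfold rhom
      split_ifs with h1 h2 h3
      · exfalso; linarith [h1.1]
      · exfalso; linarith [h2.1]
      · exfalso; linarith [h3.1]
      · rfl
    rw [h0]; exact rhom_nonneg _ _
  · rcases le_or_gt x ((m:ℝ)+1) with h2 | h2
    · have h1 : rhom (m+1) x = 1 := by
        unfold rhom
        push_cast
        split_ifs with ha hb hc
        · exfalso; linarith [ha.2]
        · rfl
        · exfalso; push_neg at hb; linarith [hb h.le]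
        · exfalso; push_neg at hb; linarith [hb h.le]
      rw [h1]; exact rhom_le_one _ _
    · have h0 : rhom m x = 0 := by
        unfold rhom
        split_ifs with h1 h2 h3
        · exfalso; linarith [h1.2]
        · exfalso; linarith [h2.2]
        · exfalso; linarith [h3.2]
        · rfl
      rw [h0]; exact rhom_nonneg _ _

lemma Cbound_le_max {lam : ℝ} (m k : ℕ) (hk : k = m ∨ k = m + 1) :
    Cbound lam k ≤ max (Cbound lam m) (Cbound lam (m+1)) := by
  rcases hk with rfl | rfl
  · exact le_max_left _ _
  · exact le_max_right _ _

lemma one_div_succ_le {m k : ℕ} (hk1 : 1 ≤ k) (hk2 : k ≤ m + 1) :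
    1 / ((m:ℝ) + 1) ≤ 1 / (k:ℝ) := by
  have h1 : (0:ℝ) < (k:ℝ) := by exact_mod_cast hk1
  have h2 : (k:ℝ) ≤ (m:ℝ) + 1 := by exact_mod_cast hk2
  rw [div_le_div_iff₀ (by linarith) h1]
  linarith

lemma ite_hpen_mono {lam : ℝ} (hlam : 0 < lam) {m : ℕ} (hm : 1 ≤ m) (e y : ℝ) :
    (if 1/(m:ℝ) < |e| then hpen lam (phim m y) else 0)
      ≤ (if 1/((m:ℝ)+1) < |e| then hpen lam (phim (m+1) y) else 0) := by
  have hle : 1 / ((m:ℝ) + 1) ≤ 1 / (m:ℝ) := one_div_succ_le hm (Nat.le_succ m)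
  split_ifs with h1 h2
  · have := hpen_phim_mono hlam m y
    convert this using 3 <;> push_cast <;> ring
  · exact absurd (lt_of_le_of_lt hle h1) h2
  · exact hpen_nonneg hlam _
  · exact le_refl _

lemma disint {ν μ : Measure ℝ} {γ : ℝ → ℝ} {K : ℝ → Measure ℝ} (hKmeas : Measurable K)
    (hdis : ∀ B : Set ℝ, MeasurableSet B →
      ν (B ∩ {e | γ e ≠ 0}) = ∫⁻ g in ({0}ᶜ : Set ℝ), K g B ∂μ)
    {f : ℝ → ENNReal} (hf : Measurable f) :
    ∫⁻ g in ({0}ᶜ : Set ℝ), (∫⁻ e, f e ∂(K g)) ∂μ = ∫⁻ e in {e | γ e ≠ 0}, f e ∂ν := by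
  have hγne : MeasurableSet {e | γ e ≠ 0} ∨ True := Or.inr trivial
  have hbind : ν.restrict {e | γ e ≠ 0} = Measure.bind (μ.restrict ({0}ᶜ : Set ℝ)) K := by
    ext B hB
    rw [Measure.restrict_apply hB, Measure.bind_apply hB hKmeas.aemeasurable, hdis B hB]
  calc ∫⁻ g in ({0}ᶜ : Set ℝ), (∫⁻ e, f e ∂(K g)) ∂μ
      = ∫⁻ e, f e ∂(Measure.bind (μ.restrict ({0}ᶜ : Set ℝ)) K) :=
        (Measure.lintegral_bind hKmeas.aemeasurable hf.aemeasurable).symm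
  _ = ∫⁻ e in {e | γ e ≠ 0}, f e ∂ν := by rw [hbind]

/-- **Monotonicity of the approximating drivers**: for every `m ≥ 1`, `z ∈ ℝ` and Borel `u`
with `∫ u² dν < ∞`, the quantities `f_m(z,u)` and `f_{m+1}(z,u)` are well defined and
`f_m(z,u) ≤ f_{m+1}(z,u)`. -/
theorem fm_monotone
    (ν : Measure ℝ) [SigmaFinite ν]
    (hν0 : ν {0} = 0)
    (hν2 : (∫⁻ e, ENNReal.ofReal (min 1 (e ^ 2)) ∂ν) < ⊤)
    (η γ : ℝ → ℝ) (hηmeas : Measurable η) (hγmeas : Measurable γ)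
    (C₀ : ℝ) (hC₀ : 0 < C₀)
    (hηb : ∀ e, |η e| ≤ C₀ * min 1 |e|)
    (hγb : ∀ e, |γ e| ≤ C₀ * min 1 |e|)
    (hηint : Integrable η ν)
    (μ : Measure ℝ)
    (hμ : ∀ B : Set ℝ, MeasurableSet B → μ B = ν (γ ⁻¹' (B \ {0})))
    (K : ℝ → Measure ℝ) (hKmeas : Measurable K)
    (hKprob : ∀ᵐ g ∂μ.restrict ({0}ᶜ : Set ℝ),
      K g Set.univ = 1 ∧ K g {e | γ e = g} = 1)
    (hdis : ∀ B : Set ℝ, MeasurableSet B →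
      ν (B ∩ {e | γ e ≠ 0}) = ∫⁻ g in ({0}ᶜ : Set ℝ), K g B ∂μ)
    (lam pil pib : ℝ) (hlam : 0 < lam) (hpil : 0 < pil) (hpib : 0 < pib)
    (Cke : ℝ)
    (m : ℕ) (hm : 1 ≤ m)
    (z : ℝ) (u : ℝ → ℝ) (humeas : Measurable u)
    (hu2 : Integrable (fun e => (u e) ^ 2) ν) :
    (∀ k, k = m ∨ k = m + 1 →
      (∀ p ∈ Set.Icc (-pil) pib,
        IntegrableOn (fun e => hpen lam (phim k (u e - p * η e)))
          {e | γ e = 0} (numeas ν k)) ∧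
      IntegrableOn (fun g => ⨅ p : Set.Icc (-pil) pib, f2m η γ K lam k g u p)
        ({0}ᶜ : Set ℝ) μ) ∧
    fm ν μ η γ K lam Cke pil pib m z u ≤ fm ν μ η γ K lam Cke pil pib (m + 1) z u := by
  classical
  have hγ0meas : MeasurableSet {e : ℝ | γ e = 0} := hγmeas (measurableSet_singleton 0)
  set P : ℝ := max pil pib with hPdef
  have hP : 0 < P := lt_of_lt_of_le hpil (le_max_left _ _)
  have hab : -pil ≤ pib := by linarith
  have hne : Nonempty (Set.Icc (-pil) pib) := (Set.nonempty_Icc.2 hab).to_subtype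
  have habsP : ∀ p ∈ Set.Icc (-pil) pib, |p| ≤ P := by
    intro p hp
    rw [abs_le]
    constructor
    · have := le_max_left pil pib
      simp only [hPdef]
      linarith [hp.1]
    · exact le_trans hp.2 (le_max_right _ _)
  have h0mem : (0:ℝ) ∈ Set.Icc (-pil) pib := ⟨by linarith, hpib.le⟩
  have hfin : ∀ k : ℕ, 1 ≤ k → ν (Set.Icc (-(1 / (k : ℝ))) (1 / (k : ℝ)))ᶜ < ⊤ :=
    fun k hk => numeas_set_finite hν2 hk
  -- part 1 for the f¹ term
  have hint1 : ∀ k : ℕ, 1 ≤ k → ∀ j : ℕ, 1 ≤ j → ∀ p : ℝ, |p| ≤ P →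
      IntegrableOn (fun e => hpen lam (phim k (u e - p * η e))) {e | γ e = 0} (numeas ν j) := by
    intro k hk j hj p hp
    have hIF : IsFiniteMeasure
        ((ν.restrict (Set.Icc (-(1 / (j : ℝ))) (1 / (j : ℝ)))ᶜ).restrict {e | γ e = 0}) := by
      constructor
      rw [Measure.restrict_apply_univ, Measure.restrict_apply hγ0meas]
      exact lt_of_le_of_lt (measure_mono Set.inter_subset_right) (hfin j hj)
    unfold IntegrableOn numeas
    exact integrable_hpen_fin hηmeas humeas (hηint.restrict.restrict) (hu2.restrict.restrict)
      hlam k hp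
  -- the function F
  set F : ℕ → ℝ → ℝ → ℝ :=
    fun k p e => if 1/(k:ℝ) < |e| then hpen lam (phim k (u e - p * η e)) else 0 with hFdef
  have hFmeas : ∀ k p, Measurable (F k p) := by
    intro k p
    exact Measurable.ite (measurableSet_lt measurable_const measurable_abs)
      ((continuous_hpen lam).measurable.comp ((measurable_phim k).comp
        (humeas.sub (hηmeas.const_mul p)))) measurable_const
  have hFnonneg : ∀ k p e, 0 ≤ F k p e := by
    intro k p e
    simp only [hFdef]
    split_ifs
    · exact hpen_nonneg hlam _
    · exact le_refl _
  -- f2m in terms of F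
  have hf2m_eq : ∀ k g p, f2m η γ K lam k g u p =
      (∫ e in {e | γ e = g}, F k p e ∂(K g)) - p * ∫ e in {e | γ e = g}, η e ∂(K g) := by
    intro k g p
    rfl
  -- unconditional lower bound for f2m
  have hlb : ∀ (k : ℕ) (g : ℝ), ∀ p ∈ Set.Icc (-pil) pib,
      -(P * |∫ e in {e | γ e = g}, η e ∂(K g)|) ≤ f2m η γ K lam k g u p := by
    intro k g p hp
    rw [hf2m_eq]
    have h1 : 0 ≤ ∫ e in {e | γ e = g}, F k p e ∂(K g) :=
      integral_nonneg fun e => hFnonneg k p e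
    have h2 : p * (∫ e in {e | γ e = g}, η e ∂(K g)) ≤
        P * |∫ e in {e | γ e = g}, η e ∂(K g)| := by
      calc p * (∫ e in {e | γ e = g}, η e ∂(K g))
          ≤ |p * (∫ e in {e | γ e = g}, η e ∂(K g))| := le_abs_self _
      _ = |p| * |∫ e in {e | γ e = g}, η e ∂(K g)| := abs_mul _ _
      _ ≤ P * |∫ e in {e | γ e = g}, η e ∂(K g)| :=
          mul_le_mul_of_nonneg_right (habsP p hp) (abs_nonneg _)
    linarith
  have hbddf2 : ∀ (k : ℕ) (g : ℝ),
      BddBelow (Set.range fun p : Set.Icc (-pil) pib => f2m η γ K lam k g u p) := by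
    intro k g
    exact ⟨-(P * |∫ e in {e | γ e = g}, η e ∂(K g)|), by
      rintro _ ⟨p, rfl⟩
      exact hlb k g p p.2⟩
  -- dominating functions
  set CB : ℝ := max (Cbound lam m) (Cbound lam (m+1)) with hCBdef
  have hCB0 : 0 ≤ CB := by
    refine le_trans ?_ (le_max_left _ _)
    unfold Cbound
    positivity
  set A : Set ℝ := (Set.Icc (-(1/((m:ℝ)+1))) (1/((m:ℝ)+1)))ᶜ with hAdef
  have hAmeas : MeasurableSet A := measurableSet_Icc.compl
  have hAfin : ν A < ⊤ := by
    have h := hfin (m+1) (by omega)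
    have : ((m+1 : ℕ) : ℝ) = (m:ℝ)+1 := by push_cast; ring
    rw [this] at h
    exact h
  set Gb : ℝ → ℝ := fun e => if 1/((m:ℝ)+1) < |e| then CB + (|u e| + P * |η e|) else 0
    with hGbdef
  set W0 : ℝ → ℝ := fun e => Gb e + P * |η e| with hW0def
  have hGb_nonneg : ∀ e, 0 ≤ Gb e := by
    intro e
    simp only [hGbdef]
    split_ifs
    · positivity
    · exact le_refl _
  have hW0nonneg : ∀ e, 0 ≤ W0 e := fun e => add_nonneg (hGb_nonneg e) (by positivity)
  have hGbmeas : Measurable Gb :=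
    Measurable.ite (measurableSet_lt measurable_const measurable_abs)
      (measurable_const.add (humeas.abs.add (hηmeas.abs.const_mul P))) measurable_const
  have hW0meas : Measurable W0 := hGbmeas.add (hηmeas.abs.const_mul P)
  have hGbleW0 : ∀ e, Gb e ≤ W0 e := by
    intro e
    simp only [hW0def]
    have : 0 ≤ P * |η e| := by positivity
    linarith
  have hFleGb : ∀ k : ℕ, (k = m ∨ k = m+1) → ∀ p : ℝ, |p| ≤ P → ∀ e, F k p e ≤ Gb e := by
    intro k hk p hp e
    have hk1 : 1 ≤ k := by rcases hk with rfl|rfl <;> omega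
    have hk2 : k ≤ m + 1 := by rcases hk with rfl|rfl <;> omega
    have hle := one_div_succ_le hk1 hk2
    simp only [hFdef, hGbdef]
    split_ifs with h1 h2
    · refine le_trans (hpen_sub_bound hlam k hp (u e) (η e)) ?_
      have := Cbound_le_max (lam := lam) m k hk
      simp only [hCBdef]
      linarith
    · exact absurd (lt_of_le_of_lt hle h1) h2
    · positivity
    · exact le_refl _
  -- integrability of W0 with respect to ν
  have hGbint : Integrable Gb ν := by
    have hmem : ∀ e : ℝ, e ∈ A ↔ 1/((m:ℝ)+1) < |e| := by
      intro e
      rw [hAdef, Set.mem_compl_iff, Set.mem_Icc, not_and_or]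
      rw [lt_abs]
      constructor
      · rintro (h | h)
        · right; push_neg at h; linarith
        · left; push_neg at h; linarith
      · rintro (h | h)
        · right; linarith
        · left; push_neg; linarith
    have hGbind : Gb = A.indicator (fun e => CB + (|u e| + P * |η e|)) := by
      funext e
      rw [Set.indicator_apply]
      simp only [hGbdef]
      by_cases h : e ∈ A
      · rw [if_pos ((hmem e).mp h), if_pos h]
      · rw [if_neg (fun hc => h ((hmem e).mpr hc)), if_neg h]
    rw [hGbind, integrable_indicator_iff hAmeas]
    have hIFA : IsFiniteMeasure (ν.restrict A) := by
      constructor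
      rw [Measure.restrict_apply_univ]
      exact hAfin
    have habsu : Integrable (fun e => |u e|) (ν.restrict A) := by
      refine Integrable.mono' ((integrable_const (1:ℝ)).add hu2.restrict)
        humeas.abs.aestronglyMeasurable (Filter.Eventually.of_forall fun e => ?_)
      rw [Real.norm_eq_abs, abs_abs]
      exact abs_le_one_add_sq (u e)
    exact (integrable_const _).add (habsu.add (hηint.abs.restrict.const_mul P))
  have hW0int : Integrable W0 ν := hGbint.add (hηint.abs.const_mul P)
  -- the linear functional W
  set H : ℝ → ENNReal := fun e => ENNReal.ofReal (W0 e) with hHdef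
  have hHmeas : Measurable H := hW0meas.ennreal_ofReal
  set Wlin : ℝ → ENNReal := fun g => ∫⁻ e, H e ∂(K g) with hWlindef
  have hWlinmeas : Measurable Wlin := (Measure.measurable_lintegral hHmeas).comp hKmeas
  have hWeq : ∫⁻ g in ({0}ᶜ : Set ℝ), Wlin g ∂μ = ∫⁻ e in {e | γ e ≠ 0}, H e ∂ν :=
    disint hKmeas hdis hHmeas
  have hHfin : ∫⁻ e in {e | γ e ≠ 0}, H e ∂ν < ⊤ :=
    lt_of_le_of_lt (setLIntegral_le_lintegral _ _) hW0int.lintegral_lt_top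
  have hWlt : ∀ᵐ g ∂μ.restrict ({0}ᶜ : Set ℝ), Wlin g < ⊤ := by
    refine ae_lt_top hWlinmeas ?_
    rw [show ∫⁻ g, Wlin g ∂(μ.restrict ({0}ᶜ : Set ℝ)) = ∫⁻ g in ({0}ᶜ : Set ℝ), Wlin g ∂μ from rfl]
    rw [hWeq]
    exact hHfin.ne
  have hgood : ∀ᵐ g ∂μ.restrict ({0}ᶜ : Set ℝ),
      K g Set.univ = 1 ∧ K g {e | γ e = g} = 1 ∧ Wlin g < ⊤ := by
    filter_upwards [hKprob, hWlt] with g h1 h2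
    exact ⟨h1.1, h1.2, h2⟩
  -- per-g facts
  have hrestr : ∀ g : ℝ, K g Set.univ = 1 → K g {e | γ e = g} = 1 →
      (K g).restrict {e | γ e = g} = K g := by
    intro g h1 h2
    apply Measure.restrict_eq_self_of_ae_mem
    have hsg : MeasurableSet {e : ℝ | γ e = g} := hγmeas (measurableSet_singleton g)
    have hc : K g ({e | γ e = g}ᶜ) = 0 := by
      rw [measure_compl hsg (by rw [h2]; exact ENNReal.one_ne_top), h1, h2, tsub_self]
    rw [MeasureTheory.ae_iff]
    exact hc
  have hsetint : ∀ g : ℝ, K g Set.univ = 1 → K g {e | γ e = g} = 1 → ∀ f : ℝ → ℝ,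
      ∫ e in {e | γ e = g}, f e ∂(K g) = ∫ e, f e ∂(K g) := by
    intro g h1 h2 f
    rw [hrestr g h1 h2]
  have hW0K : ∀ g : ℝ, Wlin g < ⊤ → Integrable W0 (K g) := by
    intro g h3
    refine ⟨hW0meas.aestronglyMeasurable, ?_⟩
    rw [hasFiniteIntegral_iff_ofReal (Filter.Eventually.of_forall hW0nonneg)]
    exact h3
  have hFK : ∀ g : ℝ, Wlin g < ⊤ → ∀ k : ℕ, (k = m ∨ k = m+1) → ∀ p : ℝ, |p| ≤ P →
      Integrable (F k p) (K g) := by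
    intro g h3 k hk p hp
    refine Integrable.mono' (hW0K g h3) (hFmeas k p).aestronglyMeasurable
      (Filter.Eventually.of_forall fun e => ?_)
    rw [Real.norm_eq_abs, abs_of_nonneg (hFnonneg k p e)]
    exact le_trans (hFleGb k hk p hp e) (hGbleW0 e)
  have hηK : ∀ g : ℝ, Wlin g < ⊤ → Integrable η (K g) := by
    intro g h3
    refine Integrable.mono' ((hW0K g h3).const_mul (1/P)) hηmeas.aestronglyMeasurable
      (Filter.Eventually.of_forall fun e => ?_)
    rw [Real.norm_eq_abs]
    have hPle : P * |η e| ≤ W0 e := le_add_of_nonneg_left (hGb_nonneg e)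
    calc |η e| = (1/P) * (P * |η e|) := by field_simp
    _ ≤ (1/P) * W0 e := mul_le_mul_of_nonneg_left hPle (by positivity)
  have hf2m_eq2 : ∀ g : ℝ, K g Set.univ = 1 → K g {e | γ e = g} = 1 → ∀ (k : ℕ) (p : ℝ),
      f2m η γ K lam k g u p = (∫ e, F k p e ∂(K g)) - p * ∫ e, η e ∂(K g) := by
    intro g h1 h2 k p
    rw [hf2m_eq, hsetint g h1 h2, hsetint g h1 h2]
  have hcontf2 : ∀ g : ℝ, K g Set.univ = 1 → K g {e | γ e = g} = 1 → Wlin g < ⊤ →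
      ∀ k : ℕ, (k = m ∨ k = m+1) →
      ContinuousOn (fun p => f2m η γ K lam k g u p) (Set.Icc (-pil) pib) := by
    intro g h1 h2 h3 k hk
    have hker : Continuous fun p : Set.Icc (-pil) pib => ∫ e, F k (p:ℝ) e ∂(K g) := by
      refine continuous_of_dominated (fun p => (hFmeas k p).aestronglyMeasurable)
        (fun p => Filter.Eventually.of_forall fun e => ?_) (hW0K g h3)
        (Filter.Eventually.of_forall fun e => ?_)
      · rw [Real.norm_eq_abs, abs_of_nonneg (hFnonneg k _ e)]
        exact le_trans (hFleGb k hk _ (habsP _ p.2) e) (hGbleW0 e)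
      · simp only [hFdef]
        split_ifs with h
        · exact (continuous_hpen lam).comp ((continuous_phim k).comp
            (continuous_const.sub (continuous_subtype_val.mul continuous_const)))
        · exact continuous_const
    have hres : ContinuousOn (fun p : ℝ => ∫ e, F k p e ∂(K g)) (Set.Icc (-pil) pib) :=
      continuousOn_iff_continuous_restrict.mpr hker
    have hexp : ContinuousOn
        (fun p : ℝ => (∫ e, F k p e ∂(K g)) - p * ∫ e, η e ∂(K g)) (Set.Icc (-pil) pib) :=
      hres.sub (continuousOn_id.mul continuousOn_const)
    exact hexp.congr fun p _ => hf2m_eq2 g h1 h2 k p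
  have hinf_eq : ∀ g : ℝ, K g Set.univ = 1 → K g {e | γ e = g} = 1 → Wlin g < ⊤ →
      ∀ k : ℕ, (k = m ∨ k = m+1) →
      (⨅ p : Set.Icc (-pil) pib, f2m η γ K lam k g u p)
        = ⨅ n : ℕ, f2m η γ K lam k g u (pseq (-pil) pib n) := by
    intro g h1 h2 h3 k hk
    exact ciInf_Icc_eq_pseq hab (hcontf2 g h1 h2 h3 k hk) (fun x hx => hlb k g x hx)
  -- measurable surrogate of the infimum
  set pse : ℕ → ℝ := pseq (-pil) pib with hpsedef
  set Tn : ℕ → ℕ → ℝ → ℝ := fun k n g =>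
    (∫⁻ e, ENNReal.ofReal (F k (pse n) e) ∂(K g)).toReal
      - (pse n) * ((∫⁻ e, ENNReal.ofReal (η e) ∂(K g)).toReal
        - (∫⁻ e, ENNReal.ofReal (-(η e)) ∂(K g)).toReal) with hTndef
  have hTnmeas : ∀ k n, Measurable (Tn k n) := by
    intro k n
    apply Measurable.sub
    · exact ((Measure.measurable_lintegral
        (hFmeas k (pse n)).ennreal_ofReal).comp hKmeas).ennreal_toReal
    · exact measurable_const.mul
        ((((Measure.measurable_lintegral hηmeas.ennreal_ofReal).comp hKmeas).ennreal_toReal).sub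
          (((Measure.measurable_lintegral hηmeas.neg.ennreal_ofReal).comp hKmeas).ennreal_toReal))
  have hTn_eq : ∀ g : ℝ, K g Set.univ = 1 → K g {e | γ e = g} = 1 → Wlin g < ⊤ →
      ∀ (k : ℕ) (n : ℕ), f2m η γ K lam k g u (pse n) = Tn k n g := by
    intro g h1 h2 h3 k n
    rw [hf2m_eq2 g h1 h2 k (pse n)]
    simp only [hTndef]
    congr 1
    · rw [integral_eq_lintegral_of_nonneg_ae (Filter.Eventually.of_forall (hFnonneg k (pse n)))
        (hFmeas k (pse n)).aestronglyMeasurable]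
    · congr 1
      rw [integral_eq_lintegral_pos_part_sub_lintegral_neg_part (hηK g h3)]
  have hinfS : ∀ g : ℝ, K g Set.univ = 1 → K g {e | γ e = g} = 1 → Wlin g < ⊤ →
      ∀ k : ℕ, (k = m ∨ k = m+1) →
      (⨅ p : Set.Icc (-pil) pib, f2m η γ K lam k g u p) = ⨅ n : ℕ, Tn k n g := by
    intro g h1 h2 h3 k hk
    rw [hinf_eq g h1 h2 h3 k hk]
    exact iInf_congr fun n => hTn_eq g h1 h2 h3 k n
  have hAESM : ∀ k : ℕ, (k = m ∨ k = m+1) →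
      AEStronglyMeasurable (fun g => ⨅ p : Set.Icc (-pil) pib, f2m η γ K lam k g u p)
        (μ.restrict ({0}ᶜ : Set ℝ)) := by
    intro k hk
    refine ⟨fun g => ⨅ n : ℕ, Tn k n g, (Measurable.iInf (hTnmeas k)).stronglyMeasurable, ?_⟩
    filter_upwards [hgood] with g hg
    exact hinfS g hg.1 hg.2.1 hg.2.2 k hk
  have hB2int : Integrable (fun g => 2 * (Wlin g).toReal) (μ.restrict ({0}ᶜ : Set ℝ)) := by
    refine ⟨((hWlinmeas.ennreal_toReal).const_mul 2).aestronglyMeasurable, ?_⟩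
    rw [hasFiniteIntegral_iff_ofReal (Filter.Eventually.of_forall fun g => by positivity)]
    calc ∫⁻ g, ENNReal.ofReal (2 * (Wlin g).toReal) ∂(μ.restrict ({0}ᶜ : Set ℝ))
        ≤ ∫⁻ g, 2 * Wlin g ∂(μ.restrict ({0}ᶜ : Set ℝ)) := by
          refine lintegral_mono fun g => ?_
          rw [ENNReal.ofReal_mul (by norm_num)]
          gcongr
          · simp
          · exact ENNReal.ofReal_toReal_le
    _ = 2 * ∫⁻ g, Wlin g ∂(μ.restrict ({0}ᶜ : Set ℝ)) := lintegral_const_mul 2 hWlinmeas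
    _ < ⊤ := by
        refine ENNReal.mul_lt_top (by norm_num) ?_
        rw [show ∫⁻ g, Wlin g ∂(μ.restrict ({0}ᶜ : Set ℝ))
          = ∫⁻ g in ({0}ᶜ : Set ℝ), Wlin g ∂μ from rfl, hWeq]
        exact hHfin
  have habs_bound : ∀ g : ℝ, K g Set.univ = 1 → K g {e | γ e = g} = 1 → Wlin g < ⊤ →
      ∀ k : ℕ, (k = m ∨ k = m+1) →
      |⨅ p : Set.Icc (-pil) pib, f2m η γ K lam k g u p| ≤ 2 * (Wlin g).toReal := by
    intro g h1 h2 h3 k hk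
    have h0T : 0 ≤ (Wlin g).toReal := ENNReal.toReal_nonneg
    have hup : (⨅ p : Set.Icc (-pil) pib, f2m η γ K lam k g u p) ≤ (Wlin g).toReal := by
      calc (⨅ p : Set.Icc (-pil) pib, f2m η γ K lam k g u p)
          ≤ f2m η γ K lam k g u 0 := ciInf_le (hbddf2 k g) (⟨0, h0mem⟩ : Set.Icc (-pil) pib)
      _ = ∫ e, F k 0 e ∂(K g) := by rw [hf2m_eq2 g h1 h2 k 0]; ring
      _ = (∫⁻ e, ENNReal.ofReal (F k 0 e) ∂(K g)).toReal :=
          integral_eq_lintegral_of_nonneg_ae (Filter.Eventually.of_forall (hFnonneg k 0))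
            (hFmeas k 0).aestronglyMeasurable
      _ ≤ (Wlin g).toReal := by
          refine ENNReal.toReal_mono h3.ne (lintegral_mono fun e => ENNReal.ofReal_le_ofReal ?_)
          refine le_trans (hFleGb k hk 0 (by rw [abs_zero]; exact hP.le) e) (hGbleW0 e)
    have hPI : P * |∫ e in {e | γ e = g}, η e ∂(K g)| ≤ (Wlin g).toReal := by
      calc P * |∫ e in {e | γ e = g}, η e ∂(K g)|
          ≤ P * ∫ e in {e | γ e = g}, |η e| ∂(K g) :=
            mul_le_mul_of_nonneg_left (by
              rw [show |∫ e in {e | γ e = g}, η e ∂(K g)|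
                = ‖∫ e in {e | γ e = g}, η e ∂(K g)‖ from (Real.norm_eq_abs _).symm]
              refine le_trans (norm_integral_le_integral_norm _) ?_
              simp [Real.norm_eq_abs]) hP.le
      _ = P * ∫ e, |η e| ∂(K g) := by rw [hsetint g h1 h2]
      _ = ∫ e, P * |η e| ∂(K g) := (integral_const_mul P _).symm
      _ = (∫⁻ e, ENNReal.ofReal (P * |η e|) ∂(K g)).toReal :=
          integral_eq_lintegral_of_nonneg_ae
            (Filter.Eventually.of_forall fun e => by positivity)
            ((hηmeas.abs.const_mul P).aestronglyMeasurable)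
      _ ≤ (Wlin g).toReal := by
          refine ENNReal.toReal_mono h3.ne (lintegral_mono fun e => ENNReal.ofReal_le_ofReal ?_)
          exact le_add_of_nonneg_left (hGb_nonneg e)
    have hlow : -(P * |∫ e in {e | γ e = g}, η e ∂(K g)|)
        ≤ ⨅ p : Set.Icc (-pil) pib, f2m η γ K lam k g u p :=
      le_ciInf fun p => hlb k g p p.2
    rw [abs_le]
    constructor <;> linarith
  have hIntInf : ∀ k : ℕ, (k = m ∨ k = m+1) →
      Integrable (fun g => ⨅ p : Set.Icc (-pil) pib, f2m η γ K lam k g u p)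
        (μ.restrict ({0}ᶜ : Set ℝ)) := by
    intro k hk
    refine Integrable.mono' hB2int (hAESM k hk) ?_
    filter_upwards [hgood] with g hg
    rw [Real.norm_eq_abs]
    exact habs_bound g hg.1 hg.2.1 hg.2.2 k hk
  have hmono_ae : ∀ᵐ g ∂μ.restrict ({0}ᶜ : Set ℝ),
      (⨅ p : Set.Icc (-pil) pib, f2m η γ K lam m g u p)
        ≤ ⨅ p : Set.Icc (-pil) pib, f2m η γ K lam (m+1) g u p := by
    filter_upwards [hgood] with g hg
    obtain ⟨h1, h2, h3⟩ := hg
    refine ciInf_mono (hbddf2 m g) fun p => ?_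
    rw [hf2m_eq2 g h1 h2 m p, hf2m_eq2 g h1 h2 (m+1) p]
    have hFle : ∀ e, F m (↑p) e ≤ F (m+1) (↑p) e := by
      intro e
      have hmono := ite_hpen_mono hlam hm e (u e - ↑p * η e)
      simp only [hFdef]
      have hc : ((m+1 : ℕ) : ℝ) = (m:ℝ)+1 := by push_cast; ring
      rw [hc]
      exact hmono
    have := integral_mono (hFK g h3 m (Or.inl rfl) p (habsP _ p.2))
      (hFK g h3 (m+1) (Or.inr rfl) p (habsP _ p.2)) hFle
    linarith
  have hIntMono :
      (∫ g in ({0}ᶜ : Set ℝ), (⨅ p : Set.Icc (-pil) pib, f2m η γ K lam m g u p) ∂μ)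
        ≤ ∫ g in ({0}ᶜ : Set ℝ), (⨅ p : Set.Icc (-pil) pib, f2m η γ K lam (m+1) g u p) ∂μ :=
    integral_mono_ae (hIntInf m (Or.inl rfl)) (hIntInf (m+1) (Or.inr rfl)) hmono_ae
  -- f1m facts
  have hf1lb : ∀ k : ℕ, ∀ p ∈ Set.Icc (-pil) pib,
      -(P * |∫ e in {e | γ e = 0}, η e ∂ν|) ≤ f1m ν η γ lam Cke k z u p := by
    intro k p hp
    unfold f1m
    have h1 : 0 ≤ lam/2 * (p - (z + Cke/lam))^2 * rhom k z :=
      mul_nonneg (by positivity) (rhom_nonneg k z)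
    have h2 : 0 ≤ ∫ e in {e | γ e = 0}, hpen lam (phim k (u e - p * η e)) ∂(numeas ν k) :=
      integral_nonneg fun e => hpen_nonneg hlam _
    have h3 : p * ∫ e in {e | γ e = 0}, η e ∂ν ≤ P * |∫ e in {e | γ e = 0}, η e ∂ν| := by
      calc p * ∫ e in {e | γ e = 0}, η e ∂ν ≤ |p * ∫ e in {e | γ e = 0}, η e ∂ν| := le_abs_self _
      _ = |p| * |∫ e in {e | γ e = 0}, η e ∂ν| := abs_mul _ _
      _ ≤ P * |∫ e in {e | γ e = 0}, η e ∂ν| :=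
          mul_le_mul_of_nonneg_right (habsP p hp) (abs_nonneg _)
    linarith
  have hf1bdd : BddBelow (Set.range fun p : Set.Icc (-pil) pib =>
      f1m ν η γ lam Cke m z u p) := by
    refine ⟨-(P * |∫ e in {e | γ e = 0}, η e ∂ν|), ?_⟩
    rintro _ ⟨p, rfl⟩
    exact hf1lb m p p.2
  have hf1mono : ∀ p ∈ Set.Icc (-pil) pib,
      f1m ν η γ lam Cke m z u p ≤ f1m ν η γ lam Cke (m+1) z u p := by
    intro p hp
    have hple := habsP p hp
    unfold f1m
    have t1 : lam / 2 * (p - (z + Cke / lam)) ^ 2 * rhom m z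
        ≤ lam / 2 * (p - (z + Cke / lam)) ^ 2 * rhom (m+1) z :=
      mul_le_mul_of_nonneg_left (rhom_mono m z) (by positivity)
    have i1 := hint1 m hm m hm p hple
    have i2 := hint1 (m+1) (by omega) m hm p hple
    have i3 := hint1 (m+1) (by omega) (m+1) (by omega) p hple
    have step1 : ∫ e in {e | γ e = 0}, hpen lam (phim m (u e - p * η e)) ∂(numeas ν m)
        ≤ ∫ e in {e | γ e = 0}, hpen lam (phim (m+1) (u e - p * η e)) ∂(numeas ν m) :=
      integral_mono i1 i2 fun e => hpen_phim_mono hlam m _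
    have hdiv : 1/((m+1 : ℕ):ℝ) ≤ 1/((m : ℕ):ℝ) := by
      have := one_div_succ_le (m := m) (k := m) hm (by omega)
      have hc : ((m+1 : ℕ) : ℝ) = (m:ℝ)+1 := by push_cast; ring
      rw [hc]
      exact this
    have hsub : (Set.Icc (-(1/((m : ℕ):ℝ))) (1/((m : ℕ):ℝ)))ᶜ
        ⊆ (Set.Icc (-(1/((m+1 : ℕ):ℝ))) (1/((m+1 : ℕ):ℝ)))ᶜ :=
      Set.compl_subset_compl.mpr (Set.Icc_subset_Icc (neg_le_neg hdiv) hdiv)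
    have hle : (numeas ν m).restrict {e | γ e = 0}
        ≤ (numeas ν (m+1)).restrict {e | γ e = 0} := by
      unfold numeas
      exact Measure.restrict_mono subset_rfl (Measure.restrict_mono hsub le_rfl)
    have step2 : ∫ e in {e | γ e = 0}, hpen lam (phim (m+1) (u e - p * η e)) ∂(numeas ν m)
        ≤ ∫ e in {e | γ e = 0}, hpen lam (phim (m+1) (u e - p * η e)) ∂(numeas ν (m+1)) :=
      integral_mono_measure hle (Filter.Eventually.of_forall fun e => hpen_nonneg hlam _) i3
    linarith
  have hf1inf : (⨅ p : Set.Icc (-pil) pib, f1m ν η γ lam Cke m z u p)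
      ≤ ⨅ p : Set.Icc (-pil) pib, f1m ν η γ lam Cke (m+1) z u p :=
    ciInf_mono hf1bdd fun p => hf1mono p p.2
  -- conclusion
  constructor
  · intro k hk
    have hk1 : 1 ≤ k := by rcases hk with rfl | rfl <;> omega
    exact ⟨fun p hp => hint1 k hk1 k hk1 p (habsP p hp), hIntInf k hk⟩
  · unfold fm
    linarith [hf1inf, hIntMono]
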